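/- Suppose the sequence (v^n)_{n≥0} solves the discrete wave scheme with source (r^n)_{n≥1}. Define Δ^0 := 0 and Δ^n := τ Σ_{k=1}^{n} v^k for n ≥ 1. Then for every n ≥ 1 the summed error identity holds: ‖π v^{n+1}‖² + a(Δ^n, Δ^{n+1}) − ‖π v^1‖² = Σ_{k=1}^{n} ( b(v^1 − v^0, v^{k+1} + v^k) + τ² Σ_{s=1}^{k} ⟨r^s, v^{k+1} + v^k⟩ ). -/

import Mathlib

open RealInnerProductSpace

/-- Summed error identity for the discrete wave scheme: with `Δ^n = τ Σ_{k=1}^n v^k`,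
`‖π v^{n+1}‖² + a(Δ^n, Δ^{n+1}) − ‖π v^1‖²
  = Σ_{k=1}^n ( b(v^1 − v^0, v^{k+1} + v^k) + τ² Σ_{s=1}^k ⟨r^s, v^{k+1} + v^k⟩ )`. -/
theorem summed_error_identity
    {H : Type*} [NormedAddCommGroup H] [InnerProductSpace ℝ H]
    (W V : Submodule ℝ H) [W.HasOrthogonalProjection]
    (a : H →ₗ[ℝ] H →ₗ[ℝ] ℝ) (hsymm : ∀ u w : H, a u w = a w u)
    (τ : ℝ) (hτ : 0 < τ)
    (v r : ℕ → H) (hvV : ∀ n, v n ∈ V)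
    (hscheme : ∀ n, 1 ≤ n → ∀ w ∈ V,
      ⟪(W.orthogonalProjectionOnto ((τ ^ 2)⁻¹ • (v (n + 1) - 2 • v n + v (n - 1))) : H),
        (W.orthogonalProjectionOnto w : H)⟫ + a (v n) w = ⟪r n, w⟫)
    (n : ℕ) (hn : 1 ≤ n) :
    ‖(W.orthogonalProjectionOnto (v (n + 1)) : H)‖ ^ 2
      + a (τ • ∑ k ∈ Finset.Icc 1 n, v k) (τ • ∑ k ∈ Finset.Icc 1 (n + 1), v k)
      - ‖(W.orthogonalProjectionOnto (v 1) : H)‖ ^ 2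
    = ∑ k ∈ Finset.Icc 1 n,
        (⟪(W.orthogonalProjectionOnto (v 1 - v 0) : H),
            (W.orthogonalProjectionOnto (v (k + 1) + v k) : H)⟫
          + τ ^ 2 * ∑ s ∈ Finset.Icc 1 k, ⟪r s, v (k + 1) + v k⟫) := by
  set P : H →ₗ[ℝ] H := W.subtype ∘ₗ (W.orthogonalProjectionOnto).toLinearMap with hP
  have hPdef : ∀ x : H, (W.orthogonalProjectionOnto x : H) = P x := fun x => rfl
  set Δ : ℕ → H := fun m => τ • ∑ k ∈ Finset.Icc 1 m, v k with hΔ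
  set F : ℕ → ℝ := fun m => ‖P (v (m + 1))‖ ^ 2 + a (Δ m) (Δ (m + 1)) with hF
  have hτ2 : (τ ^ 2 : ℝ) ≠ 0 := pow_ne_zero 2 hτ.ne'
  -- key per-step identity
  have key : ∀ m : ℕ, 1 ≤ m →
      F m - F (m - 1)
        = ⟪P (v 1 - v 0), P (v (m + 1) + v m)⟫
          + τ ^ 2 * ∑ s ∈ Finset.Icc 1 m, ⟪r s, v (m + 1) + v m⟫ := by
    intro m hm
    set w : H := v (m + 1) + v m with hw
    have hwV : w ∈ V := V.add_mem (hvV _) (hvV _)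
    have hsum : ∑ s ∈ Finset.Icc 1 m,
        (⟪P ((τ ^ 2)⁻¹ • (v (s + 1) - 2 • v s + v (s - 1))), P w⟫ + a (v s) w)
        = ∑ s ∈ Finset.Icc 1 m, ⟪r s, w⟫ := by
      refine Finset.sum_congr rfl fun s hs => ?_
      have hs1 : 1 ≤ s := (Finset.mem_Icc.mp hs).1
      simpa [hPdef] using hscheme s hs1 w hwV
    -- telescope of second difference
    have tele : ∀ M : ℕ, ∑ s ∈ Finset.Icc 1 M, (v (s + 1) - 2 • v s + v (s - 1))
        = (v (M + 1) - v M) - (v 1 - v 0) := by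
      intro M
      induction M with
      | zero => simp
      | succ M ih =>
        rw [Finset.sum_Icc_succ_top (by omega), ih]
        simp only [Nat.add_sub_cancel]
        abel
    -- rewrite LHS of hsum
    have hsplit : ∑ s ∈ Finset.Icc 1 m,
        (⟪P ((τ ^ 2)⁻¹ • (v (s + 1) - 2 • v s + v (s - 1))), P w⟫ + a (v s) w)
        = (τ ^ 2)⁻¹ * ⟪P ((v (m + 1) - v m) - (v 1 - v 0)), P w⟫
          + a (∑ s ∈ Finset.Icc 1 m, v s) w := by
      rw [Finset.sum_add_distrib]
      congr 1
      · rw [← tele m]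
        simp only [map_smul, real_inner_smul_left]
        rw [← Finset.mul_sum, ← sum_inner, ← map_sum]
      · rw [map_sum, LinearMap.sum_apply]
    have heq : (τ ^ 2)⁻¹ * ⟪P ((v (m + 1) - v m) - (v 1 - v 0)), P w⟫
          + a (∑ s ∈ Finset.Icc 1 m, v s) w = ∑ s ∈ Finset.Icc 1 m, ⟪r s, w⟫ := by
      rw [← hsplit]; exact hsum
    -- multiply by τ²
    have heq2 : ⟪P ((v (m + 1) - v m) - (v 1 - v 0)), P w⟫
          + τ ^ 2 * a (∑ s ∈ Finset.Icc 1 m, v s) w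
        = τ ^ 2 * ∑ s ∈ Finset.Icc 1 m, ⟪r s, w⟫ := by
      have := congrArg (fun x => τ ^ 2 * x) heq
      field_simp at this ⊢
      linarith [this]
    -- b-part identity
    have hb : ⟪P ((v (m + 1) - v m)), P w⟫ = ‖P (v (m + 1))‖ ^ 2 - ‖P (v m)‖ ^ 2 := by
      rw [hw]
      rw [map_sub, map_add, inner_sub_left, inner_add_right, inner_add_right]
      rw [real_inner_self_eq_norm_sq, real_inner_self_eq_norm_sq,
        real_inner_comm (P (v m)) (P (v (m + 1)))]
      ring
    -- a-part identity
    have hΔdiff : Δ (m + 1) - Δ (m - 1) = τ • w := by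
      obtain ⟨j, rfl⟩ : ∃ j, m = j + 1 := ⟨m - 1, by omega⟩
      simp only [hΔ, Nat.add_sub_cancel, ← smul_sub, hw]
      congr 1
      rw [Finset.sum_Icc_succ_top (by omega : 1 ≤ j + 1 + 1),
        Finset.sum_Icc_succ_top (by omega : 1 ≤ j + 1)]
      abel
    have ha : τ ^ 2 * a (∑ s ∈ Finset.Icc 1 m, v s) w
        = a (Δ m) (Δ (m + 1)) - a (Δ (m - 1)) (Δ m) := by
      rw [hsymm (Δ (m - 1)) (Δ m), ← map_sub, hΔdiff]
      simp only [hΔ, map_smul, LinearMap.smul_apply, smul_eq_mul]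
      ring
    have hF1 : F m - F (m - 1)
        = ⟪P (v (m + 1) - v m), P w⟫ + τ ^ 2 * a (∑ s ∈ Finset.Icc 1 m, v s) w := by
      have hm1 : m - 1 + 1 = m := by omega
      rw [hF]
      simp only [hm1]
      rw [hb, ha]
      ring
    rw [hF1, hw] at *
    have : ⟪P (v (m + 1) - v m), P (v (m + 1) + v m)⟫
        = ⟪P ((v (m + 1) - v m) - (v 1 - v 0)), P (v (m + 1) + v m)⟫
          + ⟪P (v 1 - v 0), P (v (m + 1) + v m)⟫ := by
      rw [map_sub P (v (m + 1) - v m), inner_sub_left]; ring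
    rw [this]
    linarith [heq2]
  -- now telescope
  have hΔ0 : Δ 0 = 0 := by simp [hΔ]
  have lhs_eq : ‖P (v (n + 1))‖ ^ 2 + a (Δ n) (Δ (n + 1)) - ‖P (v 1)‖ ^ 2
      = F n - F 0 := by
    rw [hF]
    simp [hΔ0]
  have rhs_eq : ∑ k ∈ Finset.Icc 1 n,
      (⟪P (v 1 - v 0), P (v (k + 1) + v k)⟫
        + τ ^ 2 * ∑ s ∈ Finset.Icc 1 k, ⟪r s, v (k + 1) + v k⟫)
      = F n - F 0 := by
    have : ∀ k ∈ Finset.Icc 1 n,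
        (⟪P (v 1 - v 0), P (v (k + 1) + v k)⟫
          + τ ^ 2 * ∑ s ∈ Finset.Icc 1 k, ⟪r s, v (k + 1) + v k⟫)
        = F k - F (k - 1) := fun k hk => (key k (Finset.mem_Icc.mp hk).1).symm
    rw [Finset.sum_congr rfl this]
    have htel : ∀ N : ℕ, ∑ x ∈ Finset.Icc 1 N, (F x - F (x - 1)) = F N - F 0 := by
      intro N
      induction N with
      | zero => simp
      | succ N ih =>
        rw [Finset.sum_Icc_succ_top (by omega), ih]
        simp only [Nat.add_sub_cancel]
        ring
    exact htel n
  simp only [hPdef]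
  rw [lhs_eq, ← rhs_eq]
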